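/- Let Γ ⊆ ℝ^d be an open set containing the origin and Γ₀ := Γ \ {0}. Let κ : Γ₀ → (0,∞) be continuously differentiable, let U ⊆ Γ₀ be compact, and let v : [0,1] × Γ₀ → ℝ^d be such that for each t the map z ↦ v(t,z) is continuously differentiable, v and its spatial derivative ∇_z v are bounded uniformly in (t,z), and v(t,z) = 0 for all z ∉ U. Then there exist ε₀ > 0 and a constant C > 0 such that for all ε ∈ (0, ε₀), t ∈ [0,1] and z ∈ Γ₀: the point z + ε·v(t,z) lies in Γ₀, and the quantity γ_ε(t,z) := det(I + ε ∇_z v(t,z)) · κ(z + ε v(t,z)) / κ(z) satisfies |γ_ε(t,z) − 1| ≤ C ε · 1_U(z) (in particular γ_ε(t,z) = 1 whenever z ∉ U). -/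

import Mathlib

open Set


-- det multilinear bound
lemma det_abs_le' (d : ℕ) (m : Fin d → Fin d → ℝ) :
    ‖Matrix.detRowAlternating m‖ ≤ (Nat.factorial d : ℝ) * ∏ i, ‖m i‖ := by
  have h : Matrix.detRowAlternating m = Matrix.det (Matrix.of m) := rfl
  rw [h, Matrix.det_apply', Real.norm_eq_abs]
  calc |∑ σ : Equiv.Perm (Fin d), ((Equiv.Perm.sign σ : ℤ) : ℝ) * ∏ i, Matrix.of m (σ i) i|
      ≤ ∑ σ : Equiv.Perm (Fin d), |((Equiv.Perm.sign σ : ℤ) : ℝ) * ∏ i, Matrix.of m (σ i) i| :=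
        Finset.abs_sum_le_sum_abs _ _
    _ ≤ ∑ _σ : Equiv.Perm (Fin d), ∏ i, ‖m i‖ := by
        refine Finset.sum_le_sum fun σ _ => ?_
        rw [abs_mul]
        have hε : |((Equiv.Perm.sign σ : ℤ) : ℝ)| = 1 := by
          rcases Int.units_eq_one_or (Equiv.Perm.sign σ) with h1 | h1 <;>
            simp [h1]
        rw [hε, one_mul]
        calc |∏ i, Matrix.of m (σ i) i| = ∏ i, |m (σ i) i| := by
              rw [Finset.abs_prod]; rfl
          _ ≤ ∏ i, ‖m (σ i)‖ := by
              refine Finset.prod_le_prod (fun i _ => abs_nonneg _) fun i _ => ?_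
              simpa [Real.norm_eq_abs] using norm_le_pi_norm (m (σ i)) i
          _ = ∏ i, ‖m i‖ := Equiv.prod_comp σ fun i => ‖m i‖
    _ = (Nat.factorial d : ℝ) * ∏ i, ‖m i‖ := by
        rw [Finset.sum_const, Finset.card_univ, Fintype.card_perm, Fintype.card_fin,
          nsmul_eq_mul]

noncomputable def detCML (d : ℕ) : ContinuousMultilinearMap ℝ (fun _ : Fin d => (Fin d → ℝ)) ℝ :=
  (Matrix.detRowAlternating : (Fin d → ℝ) [⋀^Fin d]→ₗ[ℝ] ℝ).toMultilinearMap.mkContinuous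
    (Nat.factorial d) (det_abs_le' d)

lemma detCML_apply (d : ℕ) (m : Fin d → Fin d → ℝ) :
    detCML d m = Matrix.det (Matrix.of m) := rfl

lemma det_aux (d : ℕ) (M : ℝ) (hM : 0 ≤ M) :
    ∃ C > (0:ℝ), ∀ (A : EuclideanSpace ℝ (Fin d) →L[ℝ] EuclideanSpace ℝ (Fin d)), ‖A‖ ≤ M →
      ∀ ε : ℝ, 0 ≤ ε → ε ≤ 1 →
      |LinearMap.det ((LinearMap.id : EuclideanSpace ℝ (Fin d) →ₗ[ℝ] EuclideanSpace ℝ (Fin d))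
          + ε • A.toLinearMap) - 1| ≤ C * ε := by
  classical
  set E := EuclideanSpace ℝ (Fin d)
  let b : Module.Basis (Fin d) ℝ E := (EuclideanSpace.basisFun (Fin d) ℝ).toBasis
  -- the entries map, as a linear map into the sup-norm Pi space
  let T : (E →L[ℝ] E) →ₗ[ℝ] (Fin d → Fin d → ℝ) :=
    { toFun := fun A i j => LinearMap.toMatrix b b A.toLinearMap i j
      map_add' := fun A B => by
        funext i j
        simp [Matrix.add_apply]
      map_smul' := fun c A => by
        funext i j
        simp [Matrix.smul_apply] }
  let Tc : (E →L[ℝ] E) →L[ℝ] (Fin d → Fin d → ℝ) := LinearMap.toContinuousLinearMap T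
  set c : ℝ := ‖Tc‖ with hc
  have hc0 : 0 ≤ c := norm_nonneg Tc
  have hTc : ∀ A : E →L[ℝ] E, ‖T A‖ ≤ c * ‖A‖ := fun A => Tc.le_opNorm A
  set r₂ : Fin d → Fin d → ℝ := fun i j => (1 : Matrix (Fin d) (Fin d) ℝ) i j with hr₂
  set R : ℝ := ‖r₂‖ + c * M with hR
  have hR0 : 0 ≤ R := by positivity
  refine ⟨‖detCML d‖ * d * R ^ (d - 1) * (c * M) + 1, by positivity, ?_⟩
  intro A hA ε hε0 hε1
  set B : Matrix (Fin d) (Fin d) ℝ := LinearMap.toMatrix b b A.toLinearMap with hB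
  have hdet : LinearMap.det ((LinearMap.id : E →ₗ[ℝ] E) + ε • A.toLinearMap)
      = Matrix.det (1 + ε • B) := by
    rw [← LinearMap.det_toMatrix b]
    congr 1
    simp [map_add, map_smul, LinearMap.toMatrix_id, hB]
  set r₁ : Fin d → Fin d → ℝ := fun i j => (1 + ε • B) i j with hr₁
  have hrsub : r₁ - r₂ = ε • T A := by
    funext i j
    simp [hr₁, hr₂, Matrix.add_apply, Matrix.smul_apply, T, hB]
  have h1 : |LinearMap.det ((LinearMap.id : E →ₗ[ℝ] E) + ε • A.toLinearMap) - 1|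
      = ‖detCML d r₁ - detCML d r₂‖ := by
    rw [hdet, detCML_apply, detCML_apply]
    have h2 : Matrix.det (Matrix.of r₂) = 1 := by
      have : Matrix.of r₂ = (1 : Matrix (Fin d) (Fin d) ℝ) := rfl
      rw [this, Matrix.det_one]
    have h3 : Matrix.of r₁ = 1 + ε • B := rfl
    rw [h2, h3, Real.norm_eq_abs]
  have hsub_norm : ‖r₁ - r₂‖ ≤ c * M * ε := by
    rw [hrsub, norm_smul, Real.norm_eq_abs, abs_of_nonneg hε0]
    calc ε * ‖T A‖ ≤ ε * (c * M) := by
          refine mul_le_mul_of_nonneg_left ?_ hε0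
          exact (hTc A).trans (by nlinarith [hc0])
      _ = c * M * ε := by ring
  have hr₁n : ‖r₁‖ ≤ R := by
    have : r₁ = r₂ + (r₁ - r₂) := by ring
    rw [this]
    refine (norm_add_le _ _).trans ?_
    rw [hR]
    have : ‖r₁ - r₂‖ ≤ c * M := hsub_norm.trans (by nlinarith [mul_nonneg hc0 hM])
    linarith
  have hr₂n : ‖r₂‖ ≤ R := by
    rw [hR]; nlinarith
  have hmax : max ‖r₁‖ ‖r₂‖ ≤ R := max_le hr₁n hr₂n
  rw [h1]
  calc ‖detCML d r₁ - detCML d r₂‖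
      ≤ ‖detCML d‖ * (Fintype.card (Fin d)) * max ‖r₁‖ ‖r₂‖ ^ (Fintype.card (Fin d) - 1)
        * ‖r₁ - r₂‖ := (detCML d).norm_image_sub_le r₁ r₂
    _ ≤ ‖detCML d‖ * d * R ^ (d - 1) * (c * M * ε) := by
        rw [Fintype.card_fin]
        gcongr

    _ ≤ (‖detCML d‖ * d * R ^ (d - 1) * (c * M) + 1) * ε := by nlinarith [norm_nonneg (detCML d), hR0, hc0, hM, pow_nonneg hR0 (d-1)]

lemma aux_offU {d : ℕ} {Γ₀ : Set (EuclideanSpace ℝ (Fin d))} (hΓ₀ : IsOpen Γ₀)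
    {κ : EuclideanSpace ℝ (Fin d) → ℝ} (hκpos : ∀ z ∈ Γ₀, 0 < κ z)
    {U : Set (EuclideanSpace ℝ (Fin d))} (hUc : IsClosed U)
    {f : EuclideanSpace ℝ (Fin d) → EuclideanSpace ℝ (Fin d)} (hf : ∀ x ∉ U, f x = 0)
    {z : EuclideanSpace ℝ (Fin d)} (hz : z ∈ Γ₀) (hzU : z ∉ U) (ε c : ℝ) (hc : 0 ≤ c) :
    z + ε • f z ∈ Γ₀ ∧
      |LinearMap.det ((LinearMap.id : EuclideanSpace ℝ (Fin d) →ₗ[ℝ] EuclideanSpace ℝ (Fin d))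
          + ε • (fderiv ℝ f z).toLinearMap) * κ (z + ε • f z) / κ z - 1|
        ≤ c * U.indicator (fun _ => (1 : ℝ)) z := by
  have hfz : f z = 0 := hf z hzU
  have hmem : z + ε • f z = z := by rw [hfz, smul_zero, add_zero]
  have hfd : fderiv ℝ f z = 0 := by
    have h1 : f =ᶠ[nhds z] fun _ => (0 : EuclideanSpace ℝ (Fin d)) :=
      Filter.eventuallyEq_of_mem (hUc.isOpen_compl.mem_nhds hzU) fun x hx => hf x hx
    rw [h1.fderiv_eq]
    exact fderiv_const_apply 0
  refine ⟨by rw [hmem]; exact hz, ?_⟩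
  rw [hmem, hfd]
  have : ((0 : EuclideanSpace ℝ (Fin d) →L[ℝ] EuclideanSpace ℝ (Fin d)) :
      EuclideanSpace ℝ (Fin d) →ₗ[ℝ] EuclideanSpace ℝ (Fin d)) = 0 := rfl
  rw [this, smul_zero, add_zero, LinearMap.det_id, one_mul,
    div_self (hκpos z hz).ne', sub_self, abs_zero, indicator_of_notMem hzU, mul_zero]

/-- For `v` supported in a compact set `U ⊆ Γ₀` with bounded `v, ∇v`, the perturbation
`z ↦ z + ε v(t,z)` stays in `Γ₀` and the Jacobian/density factor
`γ_ε(t,z) = det(I + ε ∇v(t,z)) κ(z + ε v(t,z))/κ(z)` satisfies `|γ_ε - 1| ≤ C ε 1_U(z)`. -/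
theorem gamma_eps_estimate (d : ℕ) (Γ : Set (EuclideanSpace ℝ (Fin d)))
    (hΓ : IsOpen Γ) (h0 : (0 : EuclideanSpace ℝ (Fin d)) ∈ Γ)
    (κ : EuclideanSpace ℝ (Fin d) → ℝ)
    (hκ : ContDiffOn ℝ 1 κ (Γ \ {0})) (hκpos : ∀ z ∈ Γ \ {0}, 0 < κ z)
    (U : Set (EuclideanSpace ℝ (Fin d))) (hU : IsCompact U) (hUΓ : U ⊆ Γ \ {0})
    (v : ℝ → EuclideanSpace ℝ (Fin d) → EuclideanSpace ℝ (Fin d))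
    (hv : ∀ t ∈ Icc (0 : ℝ) 1, ContDiffOn ℝ 1 (v t) (Γ \ {0}))
    (M : ℝ)
    (hvb : ∀ t ∈ Icc (0 : ℝ) 1, ∀ z ∈ Γ \ {0},
      ‖v t z‖ ≤ M ∧ ‖fderiv ℝ (v t) z‖ ≤ M)
    (hv0 : ∀ t ∈ Icc (0 : ℝ) 1, ∀ z ∉ U, v t z = 0) :
    ∃ ε₀ > (0 : ℝ), ∃ C > (0 : ℝ), ∀ ε ∈ Ioo (0 : ℝ) ε₀, ∀ t ∈ Icc (0 : ℝ) 1,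
      ∀ z ∈ Γ \ {0},
      z + ε • v t z ∈ Γ \ {0} ∧
      |LinearMap.det
          ((LinearMap.id : EuclideanSpace ℝ (Fin d) →ₗ[ℝ] EuclideanSpace ℝ (Fin d))
            + ε • (fderiv ℝ (v t) z).toLinearMap) *
        κ (z + ε • v t z) / κ z - 1|
        ≤ C * ε * U.indicator (fun _ => (1 : ℝ)) z := by
  have hΓ₀ : IsOpen (Γ \ {0}) := hΓ.sdiff isClosed_singleton
  rcases U.eq_empty_or_nonempty with hUe | ⟨z₀, hz₀⟩
  · refine ⟨1, one_pos, 1, one_pos, fun ε hε t ht z hz => ?_⟩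
    have hzU : z ∉ U := by rw [hUe]; exact notMem_empty z
    exact aux_offU hΓ₀ hκpos hU.isClosed (hv0 t ht) hz hzU ε (1 * ε) (by linarith [hε.1])
  -- U nonempty
  have hzΓ₀ : z₀ ∈ Γ \ {0} := hUΓ hz₀
  have hM0 : 0 ≤ M :=
    le_trans (norm_nonneg _) (hvb 0 ⟨le_refl 0, zero_le_one⟩ z₀ hzΓ₀).1
  obtain ⟨δ, hδpos, hδ⟩ := hU.exists_cthickening_subset_open hΓ₀ hUΓ
  set K := Metric.cthickening δ U with hK
  have hKc : IsCompact K := hU.cthickening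
  have hKne : K.Nonempty := ⟨z₀, Metric.self_subset_cthickening U hz₀⟩
  have hκc : ContinuousOn κ K := (hκ.continuousOn).mono hδ
  obtain ⟨zm, hzm, hmin⟩ := hKc.exists_isMinOn hKne hκc
  obtain ⟨zM, hzM, hmax⟩ := hKc.exists_isMaxOn hKne hκc
  set m : ℝ := κ zm with hm
  have hm0 : 0 < m := hκpos zm (hδ hzm)
  set Bκ : ℝ := κ zM with hBκ
  have hκK : ∀ x ∈ K, m ≤ κ x ∧ κ x ≤ Bκ := fun x hx => ⟨hmin hx, hmax hx⟩
  have hκd : ContinuousOn (fderiv ℝ κ) (Γ \ {0}) :=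
    hκ.continuousOn_fderiv_of_isOpen hΓ₀ le_rfl
  obtain ⟨L, hL⟩ := hKc.exists_bound_of_continuousOn (hκd.mono hδ)
  have hL0 : 0 ≤ L := le_trans (norm_nonneg _) (hL zm hzm)
  obtain ⟨C₁, hC₁pos, hC₁⟩ := det_aux d M hM0
  set ε₀ : ℝ := min 1 (δ / (M + 1)) with hε₀
  have hε₀pos : 0 < ε₀ := lt_min one_pos (div_pos hδpos (by linarith))
  set C : ℝ := (C₁ * Bκ + L * M) / m with hC
  have hBκ0 : 0 < Bκ := hκpos zM (hδ hzM)
  have hCpos : 0 < C := div_pos (by nlinarith) hm0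
  refine ⟨ε₀, hε₀pos, C, hCpos, fun ε hε t ht z hz => ?_⟩
  by_cases hzU : z ∉ U
  · exact aux_offU hΓ₀ hκpos hU.isClosed (hv0 t ht) hz hzU ε (C * ε)
      (le_of_lt (mul_pos hCpos hε.1))
  push_neg at hzU
  have hε1 : ε ≤ 1 := le_of_lt (lt_of_lt_of_le hε.2 (min_le_left _ _))
  have hεδ : ε * M < δ := by
    have h2 : ε < δ / (M + 1) := lt_of_lt_of_le hε.2 (min_le_right _ _)
    have h3 : ε * (M + 1) < δ := (lt_div_iff₀ (by linarith)).mp h2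
    nlinarith [hε.1]
  have hvz := hvb t ht z hz
  have hznorm : ‖ε • v t z‖ ≤ ε * M := by
    rw [norm_smul, Real.norm_eq_abs, abs_of_nonneg (le_of_lt hε.1)]
    exact mul_le_mul_of_nonneg_left hvz.1 (le_of_lt hε.1)
  set z' := z + ε • v t z with hz'
  have hz'ball : z' ∈ Metric.closedBall z δ := by
    rw [Metric.mem_closedBall, dist_eq_norm, hz', add_sub_cancel_left]
    exact hznorm.trans (le_of_lt hεδ)
  have hballK : Metric.closedBall z δ ⊆ K :=
    Metric.closedBall_subset_cthickening hzU δ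
  have hz'K : z' ∈ K := hballK hz'ball
  have hz'Γ : z' ∈ Γ \ {0} := hδ hz'K
  refine ⟨hz'Γ, ?_⟩
  -- κ difference estimate on the closed ball
  have hκdiff : ‖κ z' - κ z‖ ≤ L * (ε * M) := by
    have hsub : Metric.closedBall z δ ⊆ Γ \ {0} := fun x hx => hδ (hballK hx)
    have hdiffat : ∀ x ∈ Metric.closedBall z δ, DifferentiableAt ℝ κ x := fun x hx =>
      (hκ.differentiableOn one_ne_zero).differentiableAt (hΓ₀.mem_nhds (hsub hx))
    have hfb : ∀ x ∈ Metric.closedBall z δ, ‖fderiv ℝ κ x‖ ≤ L := fun x hx =>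
      hL x (hballK hx)
    have := (convex_closedBall z δ).norm_image_sub_le_of_norm_fderiv_le hdiffat hfb
      (Metric.mem_closedBall_self (le_of_lt hδpos)) hz'ball
    refine this.trans ?_
    have : ‖z' - z‖ ≤ ε * M := by rw [hz', add_sub_cancel_left]; exact hznorm
    nlinarith [norm_nonneg (z' - z)]
  have hdet := hC₁ (fderiv ℝ (v t) z) hvz.2 ε (le_of_lt hε.1) hε1
  -- assemble
  have hκz : m ≤ κ z := (hκK z (Metric.self_subset_cthickening U hzU)).1
  have hκz' := hκK z' hz'K
  have hκzpos : 0 < κ z := lt_of_lt_of_le hm0 hκz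
  set D : ℝ := LinearMap.det
      ((LinearMap.id : EuclideanSpace ℝ (Fin d) →ₗ[ℝ] EuclideanSpace ℝ (Fin d))
        + ε • (fderiv ℝ (v t) z).toLinearMap) with hD
  rw [indicator_of_mem hzU, mul_one]
  have key : |D * κ z' - κ z| ≤ (C₁ * Bκ + L * M) * ε := by
    have h4 : D * κ z' - κ z = (D - 1) * κ z' + (κ z' - κ z) := by ring
    rw [h4]
    refine (abs_add_le _ _).trans ?_
    have h5 : |(D - 1) * κ z'| ≤ C₁ * ε * Bκ := by
      rw [abs_mul, abs_of_pos (lt_of_lt_of_le hm0 hκz'.1)]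
      exact mul_le_mul hdet hκz'.2 (le_of_lt (lt_of_lt_of_le hm0 hκz'.1))
        (mul_nonneg hC₁pos.le hε.1.le)
    have h6 : |κ z' - κ z| ≤ L * M * ε := by
      rw [← Real.norm_eq_abs]
      refine hκdiff.trans (le_of_eq (by ring))
    nlinarith
  have hrw : D * κ z' / κ z - 1 = (D * κ z' - κ z) / κ z := by
    field_simp
  rw [hrw, abs_div, abs_of_pos hκzpos]
  rw [div_le_iff₀ hκzpos]
  calc |D * κ z' - κ z| ≤ (C₁ * Bκ + L * M) * ε := key
    _ = C * m * ε := by rw [hC]; field_simp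
    _ ≤ C * ε * κ z := by nlinarith [mul_nonneg hCpos.le hε.1.le, hκz]
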